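/- Let P0, Pi be symmetric positive definite 2×2 (or n×n) matrices with Pi ≻ P0, μi ≥ μ0 ≥ 0, and points x0 ≠ xi satisfying (x0 − xi)ᵀ P0 (x0 − xi) + μ0 > μi. Define Pi0 := Pi − P0, χi0 := Pi xi − P0 x0, σi0 := xiᵀ Pi xi + μi − x0ᵀ P0 x0 − μ0, and ℓi0 := χi0ᵀ Pi0⁻¹ χi0 − σi0. Then ℓi0 > 0. -/

import Mathlib

open Matrix

theorem stmt4 (n : ℕ) (P0 Pi : Matrix (Fin n) (Fin n) ℝ)
    (hP0 : P0.PosDef) (hPi : Pi.PosDef) (hPP : (Pi - P0).PosDef)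
    (μ0 μi : ℝ) (hμ0 : 0 ≤ μ0) (hμ : μ0 ≤ μi)
    (x0 xi : Fin n → ℝ) (hx : x0 ≠ xi)
    (hass : (x0 - xi) ⬝ᵥ (P0 *ᵥ (x0 - xi)) + μ0 > μi) :
    0 < (Pi *ᵥ xi - P0 *ᵥ x0) ⬝ᵥ ((Pi - P0)⁻¹ *ᵥ (Pi *ᵥ xi - P0 *ᵥ x0)) -
      (xi ⬝ᵥ (Pi *ᵥ xi) + μi - x0 ⬝ᵥ (P0 *ᵥ x0) - μ0) := by
  set Q := Pi - P0 with hQdef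
  set χ := Pi *ᵥ xi - P0 *ᵥ x0 with hχdef
  set c := Q⁻¹ *ᵥ χ with hcdef
  have hQsym : Qᵀ = Q := by
    have := hPP.1
    rwa [Matrix.IsHermitian, conjTranspose_eq_transpose_of_trivial] at this
  have hP0sym : P0ᵀ = P0 := by
    have := hP0.1
    rwa [Matrix.IsHermitian, conjTranspose_eq_transpose_of_trivial] at this
  have symdot : ∀ (A : Matrix (Fin n) (Fin n) ℝ), Aᵀ = A →
      ∀ a b : Fin n → ℝ, a ⬝ᵥ (A *ᵥ b) = b ⬝ᵥ (A *ᵥ a) := by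
    intro A hA a b
    rw [dotProduct_mulVec]
    nth_rewrite 1 [← hA]
    rw [vecMul_transpose, dotProduct_comm]
  have hdet : IsUnit Q.det := isUnit_iff_ne_zero.mpr (ne_of_gt hPP.det_pos)
  have hQc : Q *ᵥ c = χ := by
    rw [hcdef, mulVec_mulVec, Matrix.mul_nonsing_inv _ hdet, one_mulVec]
  have h1 : c ⬝ᵥ (Q *ᵥ xi) = xi ⬝ᵥ χ := by rw [symdot Q hQsym, hQc]
  have h2 : x0 ⬝ᵥ (P0 *ᵥ xi) = xi ⬝ᵥ (P0 *ᵥ x0) := symdot P0 hP0sym x0 xi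
  have r1 : (xi - c) ⬝ᵥ (Q *ᵥ (xi - c)) =
      xi ⬝ᵥ (Q *ᵥ xi) - 2 * (xi ⬝ᵥ χ) + χ ⬝ᵥ c := by
    rw [mulVec_sub, hQc, dotProduct_sub, sub_dotProduct, sub_dotProduct, h1,
      dotProduct_comm c χ]
    ring
  have r2 : xi ⬝ᵥ (Q *ᵥ xi) = xi ⬝ᵥ (Pi *ᵥ xi) - xi ⬝ᵥ (P0 *ᵥ xi) := by
    rw [hQdef, sub_mulVec, dotProduct_sub]
  have r3 : xi ⬝ᵥ χ = xi ⬝ᵥ (Pi *ᵥ xi) - xi ⬝ᵥ (P0 *ᵥ x0) := by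
    rw [hχdef, dotProduct_sub]
  have r4 : (x0 - xi) ⬝ᵥ (P0 *ᵥ (x0 - xi)) =
      x0 ⬝ᵥ (P0 *ᵥ x0) - 2 * (xi ⬝ᵥ (P0 *ᵥ x0)) + xi ⬝ᵥ (P0 *ᵥ xi) := by
    rw [mulVec_sub, dotProduct_sub, sub_dotProduct, sub_dotProduct, h2]
    ring
  have key : χ ⬝ᵥ c - (xi ⬝ᵥ (Pi *ᵥ xi) + μi - x0 ⬝ᵥ (P0 *ᵥ x0) - μ0) =
      (xi - c) ⬝ᵥ (Q *ᵥ (xi - c)) + ((x0 - xi) ⬝ᵥ (P0 *ᵥ (x0 - xi)) + μ0 - μi) := by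
    rw [r1, r2, r3, r4]; ring
  have hq : 0 ≤ (xi - c) ⬝ᵥ (Q *ᵥ (xi - c)) := by simpa using hPP.posSemidef.dotProduct_mulVec_nonneg (xi - c)
  linarith
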